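/- arXiv:2509.06440 — 2 statements merged into one kernel-verified Lean document; each statement's English description precedes it below -/
import Mathlib

section
/- Let μ be a d-Ahlfors regular Radon measure on ℝⁿ with constant C₀ > 1. Let ξ : [0,1] → ℝ be a C¹ nonnegative function, positive on (0,1), with ξ_ε(r) = ε⁻ⁿ ξ(r/ε). Set β = min { ξ(s) : s ∈ [C₀^{-2/d}/4, 1/2] } > 0. Then for every ε ∈ (0,1), γ ∈ (0,1) with γ ≤ (8(1 + C₀^{2/d}))⁻¹, and every point z at distance at most γε from the support of μ, one has εⁿ · ∫ ξ_ε(|z − y|) dμ(y) ≥ β C₀⁻¹ 2^{−2d−1} ε^d. -/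
open MeasureTheory Metric Set

lemma arith_core (e : ℕ) (c : ℝ) (hc0 : 0 < c) (hc1 : c < 1) :
    ((4+3*c)/(8*(1+c)))^(e+1) - ((3+2*c)/(8*(1+c)))^(e+1) ≥ (1/4:ℝ)^(e+1)/2 := by
  have hD : (0:ℝ) < 8*(1+c) := by linarith
  have hq : ((1:ℝ)/4) = (2+2*c)/(8*(1+c)) := by field_simp; ring
  have key : ((2+2*c):ℝ)^(e+1)/2 ≤ (4+3*c)^(e+1) - (3+2*c)^(e+1) := by
    have h2 : ((2+2*c):ℝ)^e ≤ (3+2*c)^e := pow_le_pow_left₀ (by linarith) (by linarith) e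
    have h3 : ((3+2*c):ℝ)^e ≤ (4+3*c)^e := pow_le_pow_left₀ (by linarith) (by linarith) e
    have hp : (0:ℝ) < (3+2*c)^e := pow_pos (by linarith) e
    rw [pow_succ, pow_succ, pow_succ]
    nlinarith [mul_le_mul_of_nonneg_right h3 (show (0:ℝ) ≤ 4+3*c by linarith),
      mul_le_mul_of_nonneg_right h2 (show (0:ℝ) ≤ (2+2*c)/2 by linarith)]
  rw [hq, div_pow, div_pow, div_pow, ge_iff_le, div_div,
    mul_comm ((8*(1+c))^(e+1)) 2, ← div_div, ← sub_div]
  exact div_le_div_of_nonneg_right key (by positivity) |>.trans_eq rfl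

lemma arith (d : ℕ) (hd : 1 ≤ d) (c γ : ℝ) (hc0 : 0 < c) (hc1 : c < 1)
    (hγ0 : 0 < γ) (hγ : γ ≤ c / (8 * (1 + c))) :
    (1/4:ℝ)^d/2 ≤ (1/2 - γ)^d - (1/4 + γ/c)^d := by
  obtain ⟨e, rfl⟩ : ∃ e, d = e + 1 := ⟨d-1, by omega⟩
  have hD : (0:ℝ) < 8*(1+c) := by linarith
  have hγc : γ/c ≤ 1/(8*(1+c)) := by
    rw [div_le_div_iff₀ hc0 hD]
    rw [le_div_iff₀ hD] at hγ
    linarith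
  have h1 : ((4+3*c)/(8*(1+c)) : ℝ) ≤ 1/2 - γ := by
    rw [div_le_iff₀ hD]
    rw [le_div_iff₀ hD] at hγ
    nlinarith
  have h2 : (1/4 + γ/c : ℝ) ≤ (3+2*c)/(8*(1+c)) := by
    have : ((3+2*c)/(8*(1+c)) : ℝ) = 1/4 + 1/(8*(1+c)) := by field_simp; ring
    rw [this]; linarith
  have hb1 : (0:ℝ) ≤ (4+3*c)/(8*(1+c)) := by positivity
  have hb2 : (0:ℝ) ≤ 1/4 + γ/c := by positivity
  have m1 := pow_le_pow_left₀ hb1 h1 (e+1)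
  have m2 := pow_le_pow_left₀ hb2 h2 (e+1)
  have := arith_core e c hc0 hc1
  linarith

set_option maxHeartbeats 2000000 in
/-- Lower bound for the convolved mass `εⁿ (μ * ξ_ε)(z) ≥ β C₀⁻¹ 2^{-2d-1} ε^d` for any
point `z` at distance at most `γε` from the support of a `d`-Ahlfors regular measure `μ`,
where `β = min { ξ(s) : s ∈ [C₀^{-2/d}/4, 1/2] } > 0` and `γ ≤ (8(1 + C₀^{2/d}))⁻¹`. -/
theorem stmt2 {n : ℕ} (d : ℕ) (hd : 1 ≤ d) (hdn : d ≤ n)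
    (μ : Measure (EuclideanSpace ℝ (Fin n))) [IsFiniteMeasureOnCompacts μ]
    (C₀ : ℝ) (hC₀ : 1 < C₀)
    (hreg : ∀ x : EuclideanSpace ℝ (Fin n), (∀ r > (0:ℝ), 0 < μ (ball x r)) →
      ∀ r : ℝ, 0 < r → r ≤ 1 →
        C₀⁻¹ * r ^ d ≤ (μ (ball x r)).toReal ∧ (μ (ball x r)).toReal ≤ C₀ * r ^ d)
    (ξ : ℝ → ℝ) (hξC : ContDiff ℝ 1 ξ) (hξ0 : ∀ r, 0 ≤ ξ r)
    (hξsupp : Function.support ξ ⊆ Icc 0 1)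
    (hξpos : ∀ r ∈ Ioo (0:ℝ) 1, 0 < ξ r)
    (β : ℝ) (hβ : β = sInf (ξ '' Icc (C₀ ^ (-2 / (d:ℝ)) / 4) (1/2))) (hβpos : 0 < β)
    (ε γ : ℝ) (hε : ε ∈ Ioo (0:ℝ) 1) (hγ : γ ∈ Ioo (0:ℝ) 1)
    (hγC : γ ≤ (8 * (1 + C₀ ^ (2 / (d:ℝ))))⁻¹)
    (z : EuclideanSpace ℝ (Fin n))
    (hz : ∃ x : EuclideanSpace ℝ (Fin n),
      (∀ r > (0:ℝ), 0 < μ (ball x r)) ∧ dist z x ≤ γ * ε) :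
    ε ^ n * ∫ y, ε ^ (-(n:ℤ)) * ξ (dist z y / ε) ∂μ ≥
      β * C₀⁻¹ * 2 ^ (-(2 * (d:ℤ)) - 1) * ε ^ d := by
  obtain ⟨x, hx_supp, hzx⟩ := hz
  obtain ⟨hε0, hε1⟩ := hε
  obtain ⟨hγ0, hγ1⟩ := hγ
  have hC₀0 : (0:ℝ) < C₀ := by linarith
  have hdR : (0:ℝ) < (d:ℝ) := by exact_mod_cast hd
  set c : ℝ := C₀ ^ (-2 / (d:ℝ)) with hc_def
  have hc0 : 0 < c := Real.rpow_pos_of_pos hC₀0 _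
  have hc1 : c < 1 := by
    apply Real.rpow_lt_one_of_one_lt_of_neg hC₀
    rw [div_neg_iff]; right; constructor <;> [norm_num; exact hdR]
  have hK1 : 1 < C₀ ^ (2 / (d:ℝ)) := by
    apply Real.one_lt_rpow_iff_of_pos hC₀0 |>.2
    exact Or.inl ⟨hC₀, by positivity⟩
  have hcK : c = (C₀ ^ (2 / (d:ℝ)))⁻¹ := by
    rw [hc_def, neg_div, Real.rpow_neg hC₀0.le]
  -- rewrite the γ bound
  have hγc : γ ≤ c / (8 * (1 + c)) := by
    refine hγC.trans (le_of_eq ?_)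
    rw [hcK]
    have hK0 : (0:ℝ) < C₀ ^ (2 / (d:ℝ)) := by linarith
    field_simp
    ring
  have hγ16 : γ < 1/16 := by
    have : c / (8 * (1 + c)) < 1/16 := by
      rw [div_lt_div_iff₀ (by linarith) (by norm_num)]
      linarith
    linarith
  -- c^d = C₀⁻¹ * C₀⁻¹
  have hcd : c ^ d = C₀⁻¹ * C₀⁻¹ := by
    rw [hc_def, ← Real.rpow_natCast (C₀ ^ (-2 / (d:ℝ))) d, ← Real.rpow_mul hC₀0.le]
    rw [show (-2 / (d:ℝ)) * d = -2 by field_simp]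
    rw [show (-2:ℝ) = ((-2:ℤ):ℝ) by norm_num, Real.rpow_intCast]
    rw [show (-2:ℤ) = -1 + -1 by norm_num, zpow_add₀ (by linarith : C₀ ≠ 0)]
    simp
  -- radii
  set r₁ : ℝ := (1/2 - γ) * ε with hr₁def
  set r₂ : ℝ := (c/4 + γ) * ε with hr₂def
  have hr₁0 : 0 < r₁ := by apply mul_pos (by linarith) hε0
  have hr₁1 : r₁ ≤ 1 := by nlinarith
  have hr₂0 : 0 < r₂ := by apply mul_pos (by linarith) hε0
  have hr₂1 : r₂ ≤ 1 := by nlinarith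
  obtain ⟨hb1, -⟩ := hreg x hx_supp r₁ hr₁0 hr₁1
  obtain ⟨-, hb2⟩ := hreg x hx_supp r₂ hr₂0 hr₂1
  -- the annulus
  set A : Set (EuclideanSpace ℝ (Fin n)) := closedBall z (ε/2) \ ball z (c/4 * ε) with hAdef
  have hincl1 : ball x r₁ ⊆ A ∪ ball x r₂ := by
    intro y hy
    rw [mem_ball] at hy
    by_cases hyz : y ∈ ball z (c/4 * ε)
    · right
      rw [mem_ball] at hyz ⊢
      calc dist y x ≤ dist y z + dist z x := dist_triangle _ _ _
        _ < c/4 * ε + γ * ε := add_lt_add_of_lt_of_le hyz hzx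
        _ = r₂ := by rw [hr₂def]; ring
    · left
      refine ⟨?_, hyz⟩
      rw [mem_closedBall]
      calc dist y z ≤ dist y x + dist x z := dist_triangle _ _ _
        _ ≤ r₁ + γ * ε := by
            refine add_le_add hy.le ?_
            rw [dist_comm x z]; exact hzx
        _ = ε/2 := by rw [hr₁def]; ring
  have hball2 : ball z (c/4 * ε) ⊆ ball x r₂ := by
    intro y hy
    rw [mem_ball] at hy ⊢
    calc dist y x ≤ dist y z + dist z x := dist_triangle _ _ _
      _ < c/4 * ε + γ * ε := add_lt_add_of_lt_of_le hy hzx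
      _ = r₂ := by rw [hr₂def]; ring
  -- finiteness
  have hA_fin : μ A ≠ ⊤ := by
    refine ((measure_mono diff_subset).trans_lt ?_).ne
    exact (isCompact_closedBall z (ε/2)).measure_lt_top
  have hb2_fin : μ (ball x r₂) ≠ ⊤ := by
    refine ((measure_mono ball_subset_closedBall).trans_lt ?_).ne
    exact (isCompact_closedBall x r₂).measure_lt_top
  have hμA : C₀⁻¹ * r₁ ^ d - C₀ * r₂ ^ d ≤ (μ A).toReal := by
    have h := (measure_mono hincl1).trans (measure_union_le (μ := μ) A (ball x r₂))
    have h' : (μ (ball x r₁)).toReal ≤ (μ A).toReal + (μ (ball x r₂)).toReal := by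
      rw [← ENNReal.toReal_add hA_fin hb2_fin]
      exact ENNReal.toReal_mono (ENNReal.add_ne_top.2 ⟨hA_fin, hb2_fin⟩) h
    linarith
  -- lower bound on measure of A
  have harith := arith d hd c γ hc0 hc1 hγ0 hγc
  have hpow2 : (2:ℝ) ^ (-(2 * (d:ℤ)) - 1) = (1/4:ℝ)^d/2 := by
    rw [show -(2 * (d:ℤ)) - 1 = -(2*d+1) by ring, zpow_neg,
      show (2*(d:ℤ)+1) = ((2*d+1 : ℕ) : ℤ) by push_cast; ring, zpow_natCast,
      pow_succ, pow_mul]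
    norm_num [mul_inv, ← inv_pow]
    ring
  have hcore : C₀⁻¹ * ((1/4:ℝ)^d/2) * ε ^ d ≤ (μ A).toReal := by
    refine le_trans ?_ hμA
    have hC2 : C₀ * r₂ ^ d = C₀⁻¹ * ((1/4 + γ/c) ^ d * ε ^ d) := by
      have e1 : ((1/4:ℝ) + γ/c) = (c/4 + γ) / c := by field_simp
      rw [e1, div_pow, hr₂def, mul_pow, hcd]
      field_simp
    rw [hC2, hr₁def, mul_pow]
    have := mul_le_mul_of_nonneg_left
      (mul_le_mul_of_nonneg_right harith (by positivity : (0:ℝ) ≤ ε ^ d))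
      (by positivity : (0:ℝ) ≤ C₀⁻¹)
    calc C₀⁻¹ * ((1/4:ℝ)^d/2) * ε ^ d
        ≤ C₀⁻¹ * (((1/2 - γ)^d - (1/4 + γ/c)^d) * ε ^ d) := by
          rw [mul_assoc]; exact this
      _ = C₀⁻¹ * ((1/2 - γ)^d * ε^d) - C₀⁻¹ * ((1/4 + γ/c)^d * ε^d) := by ring
  -- the integrand
  set f : EuclideanSpace ℝ (Fin n) → ℝ := fun y => ε ^ (-(n:ℤ)) * ξ (dist z y / ε) with hfdef
  have hf_cont : Continuous f := by
    exact continuous_const.mul (hξC.continuous.comp ((continuous_const.dist continuous_id).div_const ε))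
  have hf_supp : HasCompactSupport f := by
    apply HasCompactSupport.intro (isCompact_closedBall z 1)
    intro y hy
    rw [mem_closedBall, dist_comm] at hy
    push_neg at hy
    have hzero : ξ (dist z y / ε) = 0 := by
      by_contra h0
      have hmem := hξsupp (Function.mem_support.2 h0)
      rw [mem_Icc] at hmem
      have h1 : 1 < dist z y / ε := by
        rw [lt_div_iff₀ hε0]; nlinarith
      linarith [hmem.2]
    simp [hfdef, hzero]
  have hf_int : Integrable f μ := hf_cont.integrable_of_hasCompactSupport hf_supp
  have hf_nn : ∀ y, 0 ≤ f y := fun y => mul_nonneg (by positivity) (hξ0 _)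
  have hAmeas : MeasurableSet A := measurableSet_closedBall.diff measurableSet_ball
  have hconst : ∀ y ∈ A, β * ε ^ (-(n:ℤ)) ≤ f y := by
    intro y hy
    obtain ⟨hy1, hy2⟩ := hy
    rw [mem_closedBall] at hy1
    rw [mem_ball] at hy2
    push_neg at hy2
    have hs1 : dist z y / ε ≤ 1/2 := by
      rw [div_le_iff₀ hε0, dist_comm]; linarith
    have hs0 : c/4 ≤ dist z y / ε := by
      rw [le_div_iff₀ hε0, dist_comm]
      calc c/4 * ε = c/4 * ε := rfl
        _ ≤ dist y z := hy2
    have hmem : dist z y / ε ∈ Icc (C₀ ^ (-2 / (d:ℝ)) / 4) (1/2) := ⟨hs0, hs1⟩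
    have hβle : β ≤ ξ (dist z y / ε) := by
      rw [hβ]
      exact csInf_le ⟨0, fun t ⟨s, _, hts⟩ => hts ▸ hξ0 s⟩ (mem_image_of_mem ξ hmem)
    calc β * ε ^ (-(n:ℤ)) = ε ^ (-(n:ℤ)) * β := mul_comm _ _
      _ ≤ ε ^ (-(n:ℤ)) * ξ (dist z y / ε) :=
          mul_le_mul_of_nonneg_left hβle (by positivity)
  have hint1 : β * ε ^ (-(n:ℤ)) * (μ A).toReal ≤ ∫ y in A, f y ∂μ :=
    setIntegral_ge_of_const_le_real hAmeas hA_fin hconst hf_int.integrableOn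
  have hint2 : (∫ y in A, f y ∂μ) ≤ ∫ y, f y ∂μ :=
    setIntegral_le_integral hf_int (Filter.Eventually.of_forall hf_nn)
  have hεn : (ε:ℝ) ^ n * ε ^ (-(n:ℤ)) = 1 := by
    rw [← zpow_natCast ε n, ← zpow_add₀ (ne_of_gt hε0)]; simp
  rw [ge_iff_le, hpow2]
  calc β * C₀⁻¹ * ((1/4:ℝ)^d/2) * ε ^ d = β * (C₀⁻¹ * ((1/4:ℝ)^d/2) * ε ^ d) := by ring
    _ ≤ β * (μ A).toReal := mul_le_mul_of_nonneg_left hcore hβpos.le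
    _ = ε ^ n * (β * ε ^ (-(n:ℤ)) * (μ A).toReal) := by
        rw [show ε ^ n * (β * ε ^ (-(n:ℤ)) * (μ A).toReal)
            = (ε ^ n * ε ^ (-(n:ℤ))) * (β * (μ A).toReal) by ring, hεn, one_mul]
    _ ≤ ε ^ n * ∫ y, f y ∂μ :=
        mul_le_mul_of_nonneg_left (hint1.trans hint2) (by positivity)
end

section
/- Let V be a d-varifold in ℝⁿ with ‖V‖ d-Ahlfors regular with constant C₀, and let ε, γ ∈ (0,1) with γ ≤ (8(1 + C₀^{2/d}))⁻¹. Define the approximate mean curvature H_ε(z, V) = −(δV * ρ_ε)(z) / (‖V‖ * ξ_ε)(z). Then for all z at distance at most γε from supp ‖V‖, |H_ε(z, V)| ≤ β⁻¹ C₀² 2^{3d+1} ‖ρ'‖_∞ · ε⁻¹, where β = min { ξ(s) : s ∈ [C₀^{-2/d}/4, 1/2] }. -/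
open MeasureTheory Metric Set

lemma keypow (d : ℕ) (hd : 1 ≤ d) (u v : ℝ) (hu : 1/4 ≤ u) (huv : u + 1/8 ≤ v) :
    1/8 * (1/4)^(d-1) ≤ v^d - u^d := by
  obtain ⟨m, rfl⟩ : ∃ m, d = m + 1 := ⟨d - 1, (Nat.succ_pred_eq_of_pos hd).symm⟩
  simp only [Nat.add_sub_cancel]
  have hu0 : (0:ℝ) ≤ u := by linarith
  have huv' : u ≤ v := by linarith
  have h1 : u^(m+1) ≤ u * v^m := by
    rw [pow_succ, mul_comm]
    exact mul_le_mul_of_nonneg_left (pow_le_pow_left₀ hu0 huv' m) hu0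
  have h2 : ((1:ℝ)/4)^m ≤ v^m := pow_le_pow_left₀ (by norm_num) (by linarith) m
  have h3 : (v - u) * v^m ≤ v^(m+1) - u^(m+1) := by
    rw [pow_succ]; nlinarith [pow_nonneg hu0 m]
  nlinarith [pow_nonneg (by norm_num : (0:ℝ) ≤ (1:ℝ)/4) m]

lemma grad_bound {n : ℕ} (ρ : ℝ → ℝ) (hρC : ContDiff ℝ 2 ρ) (Mρ' : ℝ)
    (hMρ' : ∀ r, |deriv ρ r| ≤ Mρ') (ε : ℝ) (hε0 : 0 < ε) (w : EuclideanSpace ℝ (Fin n)) :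
    ‖gradient (fun w : EuclideanSpace ℝ (Fin n) => ε ^ (-(n:ℤ)) * ρ (‖w‖ / ε)) w‖ ≤
      ε ^ (-(n:ℤ)) * ε⁻¹ * Mρ' := by
  have hM0 : 0 ≤ Mρ' := le_trans (abs_nonneg _) (hMρ' 0)
  have hεn : (0:ℝ) < ε ^ (-(n:ℤ)) := zpow_pos hε0 _
  rw [gradient, LinearIsometryEquiv.norm_map]
  refine norm_fderiv_le_of_lip' ℝ (by positivity) ?_
  filter_upwards with x
  have hρlip : ∀ a b : ℝ, |ρ a - ρ b| ≤ Mρ' * |a - b| := fun a b => by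
    have := convex_univ.norm_image_sub_le_of_norm_deriv_le (f := ρ)
      (fun y _ => (hρC.differentiable two_ne_zero).differentiableAt)
      (fun y _ => hMρ' y) (mem_univ b) (mem_univ a)
    simpa [Real.norm_eq_abs] using this
  have h1 : |ρ (‖x‖ / ε) - ρ (‖w‖ / ε)| ≤ Mρ' * (ε⁻¹ * ‖x - w‖) := by
    refine le_trans (hρlip _ _) (mul_le_mul_of_nonneg_left ?_ hM0)
    rw [div_sub_div_same, abs_div, abs_of_pos hε0, div_eq_inv_mul]
    exact mul_le_mul_of_nonneg_left (abs_norm_sub_norm_le x w) (by positivity)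
  calc ‖ε ^ (-(n:ℤ)) * ρ (‖x‖ / ε) - ε ^ (-(n:ℤ)) * ρ (‖w‖ / ε)‖
      = ε ^ (-(n:ℤ)) * |ρ (‖x‖ / ε) - ρ (‖w‖ / ε)| := by
        rw [← mul_sub, Real.norm_eq_abs, abs_mul, abs_of_pos hεn]
    _ ≤ ε ^ (-(n:ℤ)) * (Mρ' * (ε⁻¹ * ‖x - w‖)) := mul_le_mul_of_nonneg_left h1 hεn.le
    _ = ε ^ (-(n:ℤ)) * ε⁻¹ * Mρ' * ‖x - w‖ := by ring

lemma grad_zero {n : ℕ} (ρ : ℝ → ℝ) (hρsupp : Function.support ρ ⊆ Icc 0 1)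
    (ε : ℝ) (hε0 : 0 < ε) (w : EuclideanSpace ℝ (Fin n)) (hw : ε < ‖w‖) :
    gradient (fun w : EuclideanSpace ℝ (Fin n) => ε ^ (-(n:ℤ)) * ρ (‖w‖ / ε)) w = 0 := by
  have hev : (fun w : EuclideanSpace ℝ (Fin n) => ε ^ (-(n:ℤ)) * ρ (‖w‖ / ε))
      =ᶠ[nhds w] (fun _ => 0) := by
    have hopen : IsOpen {v : EuclideanSpace ℝ (Fin n) | ε < ‖v‖} :=
      isOpen_lt continuous_const continuous_norm
    filter_upwards [hopen.mem_nhds hw] with v hv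
    have : ρ (‖v‖ / ε) = 0 := by
      by_contra h
      have h1 : ‖v‖ / ε ≤ 1 := (hρsupp (Function.mem_support.2 h)).2
      rw [div_le_one hε0] at h1
      exact absurd h1 (not_le.2 hv)
    simp [this]
  rw [gradient, hev.fderiv_eq]
  simp

set_option maxHeartbeats 1600000 in
/-- Bound on the approximate mean curvature
`H_ε(z,V) = −(δV * ρ_ε)(z) / (‖V‖ * ξ_ε)(z)`:
`|H_ε(z,V)| ≤ β⁻¹ C₀² 2^{3d+1} ‖ρ'‖_∞ ε⁻¹` for `z` at distance at most `γε` from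
the support of the Ahlfors-regular mass measure `‖V‖`, with
`γ ≤ (8(1 + C₀^{2/d}))⁻¹` and `β = min { ξ(s) : s ∈ [C₀^{-2/d}/4, 1/2] }`. -/
theorem stmt4 {n : ℕ} (d : ℕ) (hd : 1 ≤ d) (hdn : d ≤ n)
    (V : Measure ((EuclideanSpace ℝ (Fin n)) ×
      ((EuclideanSpace ℝ (Fin n)) →L[ℝ] (EuclideanSpace ℝ (Fin n))))) [IsFiniteMeasure V]
    (hVproj : ∀ᵐ p ∂V, ∃ S : Submodule ℝ (EuclideanSpace ℝ (Fin n)),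
      Module.finrank ℝ S = d ∧ ∀ v, p.2 v = S.subtypeL (S.orthogonalProjectionOnto v))
    (C₀ : ℝ) (hC₀ : 1 < C₀)
    (hreg : ∀ x : EuclideanSpace ℝ (Fin n),
      (∀ r > (0:ℝ), 0 < (V.map Prod.fst) (ball x r)) → ∀ r : ℝ, 0 < r → r ≤ 2 →
        C₀⁻¹ * r ^ d ≤ ((V.map Prod.fst) (ball x r)).toReal ∧
          ((V.map Prod.fst) (ball x r)).toReal ≤ C₀ * r ^ d)
    (ρ : ℝ → ℝ) (hρC : ContDiff ℝ 2 ρ) (hρ0 : ∀ r, 0 ≤ ρ r)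
    (hρsupp : Function.support ρ ⊆ Icc 0 1)
    (ξ : ℝ → ℝ) (hξC : ContDiff ℝ 1 ξ) (hξ0 : ∀ r, 0 ≤ ξ r)
    (hξsupp : Function.support ξ ⊆ Icc 0 1)
    (hξpos : ∀ r ∈ Ioo (0:ℝ) 1, 0 < ξ r)
    (β : ℝ) (hβ : β = sInf (ξ '' Icc (C₀ ^ (-2 / (d:ℝ)) / 4) (1/2))) (hβpos : 0 < β)
    (Mρ' : ℝ) (hMρ' : ∀ r, |deriv ρ r| ≤ Mρ')
    (ε γ : ℝ) (hε : ε ∈ Ioo (0:ℝ) 1) (hγ : γ ∈ Ioo (0:ℝ) 1)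
    (hγC : γ ≤ (8 * (1 + C₀ ^ (2 / (d:ℝ))))⁻¹)
    (z : EuclideanSpace ℝ (Fin n))
    (hz : ∃ x : EuclideanSpace ℝ (Fin n),
      (∀ r > (0:ℝ), 0 < (V.map Prod.fst) (ball x r)) ∧ dist z x ≤ γ * ε) :
    ‖-(((∫ y, ε ^ (-(n:ℤ)) * ξ (dist z y / ε) ∂(V.map Prod.fst))⁻¹) •
        (∫ p, p.2 (gradient
          (fun w : EuclideanSpace ℝ (Fin n) => ε ^ (-(n:ℤ)) * ρ (‖w‖ / ε)) (z - p.1)) ∂V))‖ ≤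
      β⁻¹ * C₀ ^ 2 * 2 ^ (3 * d + 1) * Mρ' * ε⁻¹ := by
  obtain ⟨x, hxpos, hzx⟩ := hz
  obtain ⟨hε0, hε1⟩ := hε
  obtain ⟨hγ0, hγ1⟩ := hγ
  have hC0pos : (0:ℝ) < C₀ := lt_trans one_pos hC₀
  have hM0 : 0 ≤ Mρ' := le_trans (abs_nonneg _) (hMρ' 0)
  have hεn : (0:ℝ) < ε ^ (-(n:ℤ)) := zpow_pos hε0 _
  have hεd : (0:ℝ) < ε ^ d := pow_pos hε0 d
  have hdpos : (0:ℝ) < (d:ℝ) := by exact_mod_cast hd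
  set μ := V.map Prod.fst with hμdef
  haveI hμfin : IsFiniteMeasure μ := Measure.isFiniteMeasure_map V Prod.fst
  set f := fun w : EuclideanSpace ℝ (Fin n) => ε ^ (-(n:ℤ)) * ρ (‖w‖ / ε) with hfdef
  set K := ε ^ (-(n:ℤ)) * ε⁻¹ * Mρ' with hKdef
  have hK0 : 0 ≤ K := by rw [hKdef]; positivity
  set c2 := C₀ ^ (2 / (d:ℝ)) with hc2def
  have hc2_one : 1 ≤ c2 := Real.one_le_rpow hC₀.le (by positivity)
  have hc2_pos : (0:ℝ) < c2 := lt_of_lt_of_le one_pos hc2_one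
  have ha_eq : C₀ ^ (-2 / (d:ℝ)) = c2⁻¹ := by
    rw [hc2def, ← Real.rpow_neg hC0pos.le, neg_div]
  set a := C₀ ^ (-2 / (d:ℝ)) / 4 with hadef
  have ha_pos : 0 < a := by rw [hadef, ha_eq]; positivity
  have ha_le : a ≤ 1/4 := by
    rw [hadef, ha_eq]
    have : c2⁻¹ ≤ 1 := inv_le_one_of_one_le₀ hc2_one
    linarith
  have hγ8 : γ * (1 + c2) ≤ 1/8 := by
    have h8 : (0:ℝ) < 8 * (1 + c2) := by positivity
    have h1 : γ * (8 * (1 + c2)) ≤ (8 * (1 + c2))⁻¹ * (8 * (1 + c2)) :=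
      mul_le_mul_of_nonneg_right hγC h8.le
    rw [inv_mul_cancel₀ h8.ne'] at h1
    nlinarith
  have hγ16 : γ ≤ 1/16 := by nlinarith
  -- lower bound for the denominator
  set A := closedBall z (ε/2) \ ball z (a*ε) with hAdef
  have hAmeas : MeasurableSet A := measurableSet_closedBall.diff measurableSet_ball
  have hβle : ∀ s ∈ Icc a (1/2 : ℝ), β ≤ ξ s := fun s hs => by
    rw [hβ]
    exact csInf_le ⟨0, fun y hy => by obtain ⟨r, _, rfl⟩ := hy; exact hξ0 r⟩ ⟨s, hs, rfl⟩
  obtain ⟨r₀, hr₀mem, hr₀⟩ := isCompact_Icc.exists_isMaxOn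
    (nonempty_Icc.2 (by norm_num : (0:ℝ) ≤ 1)) hξC.continuous.continuousOn
  have hξbdd : ∀ r, ξ r ≤ ξ r₀ := fun r => by
    by_cases h : r ∈ Icc (0:ℝ) 1
    · exact hr₀ h
    · have h0 : ξ r = 0 := Function.notMem_support.1 (fun hs => h (hξsupp hs))
      rw [h0]; exact hξ0 r₀
  have hgint : Integrable (fun y => ε ^ (-(n:ℤ)) * ξ (dist z y / ε)) μ := by
    refine (integrable_const (ε ^ (-(n:ℤ)) * ξ r₀)).mono' ?_ ?_
    · exact Continuous.aestronglyMeasurable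
        (continuous_const.mul (hξC.continuous.comp
          ((continuous_const.dist continuous_id).div_const ε)))
    · filter_upwards with y
      rw [Real.norm_eq_abs, abs_of_nonneg (mul_nonneg hεn.le (hξ0 _))]
      exact mul_le_mul_of_nonneg_left (hξbdd _) hεn.le
  set c := ∫ y, ε ^ (-(n:ℤ)) * ξ (dist z y / ε) ∂μ with hcdef
  have hclower : ε ^ (-(n:ℤ)) * β * (μ A).toReal ≤ c := by
    have hind : ∫ y, A.indicator (fun _ => ε ^ (-(n:ℤ)) * β) y ∂μ
        = (μ A).toReal • (ε ^ (-(n:ℤ)) * β) := integral_indicator_const _ hAmeas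
    have hle : ∫ y, A.indicator (fun _ => ε ^ (-(n:ℤ)) * β) y ∂μ ≤ c := by
      refine integral_mono ((integrable_const _).indicator hAmeas) hgint ?_
      intro y
      by_cases hy : y ∈ A
      · rw [indicator_of_mem hy]
        refine mul_le_mul_of_nonneg_left (hβle _ ?_) hεn.le
        obtain ⟨hy1, hy2⟩ := hy
        rw [mem_closedBall] at hy1
        rw [mem_ball, not_lt] at hy2
        constructor
        · rw [le_div_iff₀ hε0, dist_comm]; exact hy2
        · rw [div_le_iff₀ hε0, dist_comm]; linarith
      · rw [indicator_of_notMem hy]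
        exact mul_nonneg hεn.le (hξ0 _)
    calc ε ^ (-(n:ℤ)) * β * (μ A).toReal
        = (μ A).toReal • (ε ^ (-(n:ℤ)) * β) := by rw [smul_eq_mul]; ring
      _ = ∫ y, A.indicator (fun _ => ε ^ (-(n:ℤ)) * β) y ∂μ := hind.symm
      _ ≤ c := hle
  -- measure estimates
  have hsub1 : ball x ((1/2 - γ)*ε) ⊆ closedBall z (ε/2) := fun y hy => by
    rw [mem_ball] at hy
    rw [mem_closedBall]
    have := dist_triangle y x z
    have hxz : dist x z ≤ γ * ε := by rw [dist_comm]; exact hzx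
    have : dist y z ≤ dist y x + γ * ε := by linarith
    nlinarith
  have hsub2 : ball z (a*ε) ⊆ ball x ((a+γ)*ε) := fun y hy => by
    rw [mem_ball] at hy ⊢
    have h1 : dist y z < a * ε := by rw [dist_comm] at hy ⊢; exact hy
    have := dist_triangle y z x
    have hzx' : dist z x ≤ γ * ε := hzx
    nlinarith
  have hsub3 : closedBall z ε ⊆ ball x (2*ε) := fun y hy => by
    rw [mem_closedBall] at hy
    rw [mem_ball]
    have := dist_triangle y z x
    nlinarith
  have h1 : C₀⁻¹ * ((1/2 - γ)*ε)^d ≤ (μ (closedBall z (ε/2))).toReal := by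
    refine le_trans (hreg x hxpos ((1/2-γ)*ε) (by nlinarith) (by nlinarith)).1 ?_
    exact ENNReal.toReal_mono (measure_ne_top μ _) (measure_mono hsub1)
  have h2 : (μ (ball z (a*ε))).toReal ≤ C₀ * ((a+γ)*ε)^d := by
    refine le_trans (ENNReal.toReal_mono (measure_ne_top μ _) (measure_mono hsub2)) ?_
    exact (hreg x hxpos ((a+γ)*ε) (by nlinarith) (by nlinarith)).2
  have hAsub : ball z (a*ε) ⊆ closedBall z (ε/2) :=
    le_trans (ball_subset_ball (by nlinarith)) ball_subset_closedBall
  have hAμ : (μ A).toReal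
      = (μ (closedBall z (ε/2))).toReal - (μ (ball z (a*ε))).toReal := by
    rw [hAdef, measure_diff hAsub measurableSet_ball.nullMeasurableSet (measure_ne_top μ _),
      ENNReal.toReal_sub_of_le (measure_mono hAsub) (measure_ne_top μ _)]
  -- key arithmetic
  have hc2d : (c2⁻¹)^d = (C₀^2)⁻¹ := by
    rw [hc2def, ← Real.rpow_neg hC0pos.le, ← Real.rpow_natCast (C₀ ^ (-(2/(d:ℝ)))) d,
      ← Real.rpow_mul hC0pos.le]
    have : -(2/(d:ℝ)) * (d:ℝ) = -2 := by field_simp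
    rw [this, show (-2:ℝ) = -((2:ℕ):ℝ) by norm_num, Real.rpow_neg hC0pos.le,
      Real.rpow_natCast]
  have hkey : C₀⁻¹ * (1/8 * (1/4)^(d-1)) * ε^d
      ≤ C₀⁻¹*((1/2-γ)*ε)^d - C₀*((a+γ)*ε)^d := by
    have hae : a + γ = c2⁻¹ * (1/4 + γ * c2) := by
      rw [hadef, ha_eq]; field_simp
    have hup : C₀*((a+γ)*ε)^d = C₀⁻¹ * (1/4 + γ * c2)^d * ε^d := by
      rw [hae, mul_pow, mul_pow, hc2d]
      have hC0ne : C₀ ≠ 0 := hC0pos.ne'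
      have : C₀ * ((C₀^2)⁻¹ * (1/4 + γ * c2)^d) = C₀⁻¹ * (1/4 + γ * c2)^d := by
        field_simp
      rw [← mul_assoc, this]
    have hlo : C₀⁻¹*((1/2-γ)*ε)^d = C₀⁻¹ * (1/2-γ)^d * ε^d := by
      rw [mul_pow, mul_assoc]
    rw [hup, hlo]
    have hkp := keypow d hd (1/4 + γ * c2) (1/2 - γ)
      (by nlinarith) (by nlinarith)
    have hC0inv : (0:ℝ) < C₀⁻¹ := by positivity
    nlinarith [mul_pos hC0inv hεd]
  set Q := ε ^ (-(n:ℤ)) * β * (C₀⁻¹ * (1/8 * (1/4)^(d-1)) * ε^d) with hQdef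
  have hQpos : 0 < Q := by
    rw [hQdef]
    have : (0:ℝ) < C₀⁻¹ * (1/8 * (1/4)^(d-1)) * ε^d := by positivity
    positivity
  have hQc : Q ≤ c := by
    refine le_trans ?_ hclower
    rw [hQdef]
    refine mul_le_mul_of_nonneg_left ?_ (mul_nonneg hεn.le hβpos.le)
    rw [hAμ]; linarith
  have hcpos : 0 < c := lt_of_lt_of_le hQpos hQc
  -- upper bound for the numerator
  set I := ∫ p, p.2 (gradient f (z - p.1)) ∂V with hIdef
  have hIle : ‖I‖ ≤ K * (μ (closedBall z ε)).toReal := by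
    refine le_trans (norm_integral_le_integral_norm _) ?_
    have hmeasp : MeasurableSet (Prod.fst ⁻¹'
        closedBall z ε : Set ((EuclideanSpace ℝ (Fin n)) ×
        ((EuclideanSpace ℝ (Fin n)) →L[ℝ] (EuclideanSpace ℝ (Fin n))))) :=
      measurableSet_closedBall.preimage measurable_fst
    have hmono : ∫ p, ‖p.2 (gradient f (z - p.1))‖ ∂V
        ≤ ∫ p, (Prod.fst ⁻¹' closedBall z ε).indicator (fun _ => K) p ∂V := by
      refine integral_mono_of_nonneg (Filter.Eventually.of_forall fun p => norm_nonneg _)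
        ((integrable_const K).indicator hmeasp) ?_
      filter_upwards [hVproj] with p hp
      obtain ⟨S, hSrank, hS⟩ := hp
      by_cases hmem : p.1 ∈ closedBall z ε
      · rw [indicator_of_mem (mem_preimage.2 hmem)]
        calc ‖p.2 (gradient f (z - p.1))‖
            = ‖(S.orthogonalProjectionOnto (gradient f (z - p.1)) :
                EuclideanSpace ℝ (Fin n))‖ := by rw [hS]; rfl
          _ = ‖S.orthogonalProjectionOnto (gradient f (z - p.1))‖ := rfl
          _ ≤ ‖gradient f (z - p.1)‖ := by
              calc ‖S.orthogonalProjectionOnto (gradient f (z - p.1))‖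
                  ≤ ‖S.orthogonalProjectionOnto‖ * ‖gradient f (z - p.1)‖ :=
                    (S.orthogonalProjectionOnto).le_opNorm _
                _ ≤ 1 * ‖gradient f (z - p.1)‖ :=
                    mul_le_mul_of_nonneg_right (Submodule.orthogonalProjectionOnto_norm_le S)
                      (norm_nonneg _)
                _ = ‖gradient f (z - p.1)‖ := one_mul _
          _ ≤ K := grad_bound ρ hρC Mρ' hMρ' ε hε0 _
      · rw [indicator_of_notMem fun h => hmem (mem_preimage.1 h)]
        have hz0 : gradient f (z - p.1) = 0 := by
          refine grad_zero ρ hρsupp ε hε0 _ ?_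
          rw [mem_closedBall, not_le] at hmem
          rw [← dist_eq_norm, dist_comm]
          exact hmem
        rw [hz0, map_zero, norm_zero]
    refine le_trans hmono ?_
    rw [integral_indicator_const _ hmeasp, smul_eq_mul, hμdef,
      Measure.map_apply measurable_fst measurableSet_closedBall]
    ring_nf
    exact (mul_comm _ _).le
  have hcb : (μ (closedBall z ε)).toReal ≤ C₀ * (2*ε)^d := by
    refine le_trans (ENNReal.toReal_mono (measure_ne_top μ _) (measure_mono hsub3)) ?_
    exact (hreg x hxpos (2*ε) (by linarith) (by linarith)).2
  -- conclusion
  rw [norm_neg, norm_smul, Real.norm_eq_abs, abs_of_pos (inv_pos.2 hcpos)]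
  have hmain : c⁻¹ * ‖I‖ ≤ Q⁻¹ * (K * (C₀ * (2*ε)^d)) := by
    refine mul_le_mul (inv_anti₀ hQpos hQc)
      (le_trans hIle (mul_le_mul_of_nonneg_left hcb hK0)) (norm_nonneg _)
      (inv_nonneg.2 hQpos.le)
  refine le_trans hmain (le_of_eq ?_)
  obtain ⟨m, rfl⟩ : ∃ m, d = m + 1 := ⟨d - 1, (Nat.succ_pred_eq_of_pos hd).symm⟩
  simp only [Nat.add_sub_cancel] at hQdef ⊢
  rw [hQdef, hKdef]
  have h4 : ((1:ℝ)/4)^m = (((2:ℝ)^m)^2)⁻¹ := by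
    rw [div_pow, one_pow, show (4:ℝ) = 2^2 by norm_num, ← pow_mul, mul_comm, pow_mul]
    norm_num
  have h2e : ((2:ℝ)*ε)^(m+1) = 2 * (2:ℝ)^m * (ε^m * ε) := by
    rw [mul_pow, pow_succ, pow_succ]; ring
  have h3m : (2:ℝ)^(3*(m+1)+1) = 16 * ((2:ℝ)^m)^3 := by
    rw [show 3*(m+1)+1 = m*3 + 4 by ring, pow_add, pow_mul]; norm_num [mul_comm]
  rw [h4, h2e, h3m, pow_succ ε m]
  have hεm : (0:ℝ) < ε^m := pow_pos hε0 m
  have h2m : (0:ℝ) < (2:ℝ)^m := pow_pos (by norm_num) m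
  field_simp
  ring
end
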